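/- If π is a portfolio whose weight processes π_1,…,π_n are continuous semimartingales, then its trading process T_π satisfies dT_π(t) = Σ_{i=1}^n d⟨π_i, log μ_i⟩_t + γ*_π(t) dt almost surely; in particular T_π is of locally bounded variation. -/

import Mathlib

open MeasureTheory intervalIntegral

section Aux

variable {α : Type*} [LinearOrder α] {E : Type*} [PseudoEMetricSpace E]

private lemma eVariationOn_add_le {E : Type*} [SeminormedAddCommGroup E] (f g : α → E)
    (s : Set α) :
    eVariationOn (fun x => f x + g x) s ≤ eVariationOn f s + eVariationOn g s := by
  apply iSup_le
  rintro ⟨n, ⟨u, hu, us⟩⟩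
  calc ∑ i ∈ Finset.range n, edist (f (u (i + 1)) + g (u (i + 1))) (f (u i) + g (u i))
      ≤ ∑ i ∈ Finset.range n,
        (edist (f (u (i + 1))) (f (u i)) + edist (g (u (i + 1))) (g (u i))) :=
        Finset.sum_le_sum fun i _ => edist_add_add_le _ _ _ _
    _ = (∑ i ∈ Finset.range n, edist (f (u (i + 1))) (f (u i)))
        + ∑ i ∈ Finset.range n, edist (g (u (i + 1))) (g (u i)) := Finset.sum_add_distrib
    _ ≤ eVariationOn f s + eVariationOn g s :=
        add_le_add (eVariationOn.sum_le (f := f) (n := n) hu us) (eVariationOn.sum_le (f := g) (n := n) hu us)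

private lemma LBV.add {E : Type*} [SeminormedAddCommGroup E] {f g : α → E} {s : Set α}
    (hf : LocallyBoundedVariationOn f s) (hg : LocallyBoundedVariationOn g s) :
    LocallyBoundedVariationOn (fun x => f x + g x) s := by
  intro a b ha hb
  exact ne_top_of_le_ne_top
    (ENNReal.add_ne_top.2 ⟨hf a b ha hb, hg a b ha hb⟩)
    (eVariationOn_add_le f g _)

private lemma LBV.const_mul {f : α → ℝ} {s : Set α} (c : ℝ)
    (hf : LocallyBoundedVariationOn f s) :
    LocallyBoundedVariationOn (fun x => c * f x) s := by
  have hlip : LipschitzWith ‖c‖₊ (fun x : ℝ => c * x) := by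
    apply LipschitzWith.of_dist_le_mul
    intro x y
    simp only [Real.dist_eq, ← mul_sub, abs_mul, coe_nnnorm, Real.norm_eq_abs, le_refl]
  exact hlip.comp_locallyBoundedVariationOn hf

private lemma LBV.const (c : ℝ) (s : Set α) :
    LocallyBoundedVariationOn (fun _ : α => c) s :=
  monotoneOn_const.locallyBoundedVariationOn

private lemma LBV.sum {ι : Type*} (t : Finset ι) {f : ι → α → ℝ} {s : Set α}
    (hf : ∀ i ∈ t, LocallyBoundedVariationOn (f i) s) :
    LocallyBoundedVariationOn (fun x => ∑ i ∈ t, f i x) s := by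
  classical
  induction t using Finset.induction_on with
  | empty => simpa using LBV.const 0 s
  | @insert a t' hnotmem ih =>
    simp only [Finset.sum_insert hnotmem]
    exact LBV.add (hf a (Finset.mem_insert_self a t'))
      (ih fun i hi => hf i (Finset.mem_insert_of_mem hi))

/-- The indefinite integral of an interval-integrable function has locally bounded
variation. -/
private lemma LBV.intervalIntegral {γ : ℝ → ℝ}
    (hγint : ∀ a b : ℝ, IntervalIntegrable γ volume a b) :
    LocallyBoundedVariationOn (fun t => ∫ s in (0:ℝ)..t, γ s) Set.univ := by
  set γp : ℝ → ℝ := fun s => (γ s + |γ s|) / 2 with hγp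
  set γm : ℝ → ℝ := fun s => (|γ s| - γ s) / 2 with hγm
  have hintp : ∀ a b : ℝ, IntervalIntegrable γp volume a b := fun a b =>
    ((hγint a b).add (hγint a b).abs).div_const 2
  have hintm : ∀ a b : ℝ, IntervalIntegrable γm volume a b := fun a b =>
    ((hγint a b).abs.sub (hγint a b)).div_const 2
  have hdiff : ∀ t, (∫ s in (0:ℝ)..t, γ s)
      = (∫ s in (0:ℝ)..t, γp s) - ∫ s in (0:ℝ)..t, γm s := by
    intro t
    rw [← intervalIntegral.integral_sub (hintp 0 t) (hintm 0 t)]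
    congr 1 with s
    simp only [hγp, hγm]
    ring
  have hmono : ∀ (δ : ℝ → ℝ), (∀ s, 0 ≤ δ s) → (∀ a b : ℝ, IntervalIntegrable δ volume a b) →
      Monotone (fun t => ∫ s in (0:ℝ)..t, δ s) := by
    intro δ hδ hint a b hab
    have := intervalIntegral.integral_add_adjacent_intervals (hint 0 a) (hint a b)
    dsimp only
    rw [← this]
    have : 0 ≤ ∫ s in a..b, δ s :=
      intervalIntegral.integral_nonneg hab fun s _ => hδ s
    linarith
  have hγpnn : ∀ s, 0 ≤ γp s := fun s => by
    have := neg_abs_le (γ s); simp only [hγp]; linarith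
  have hγmnn : ∀ s, 0 ≤ γm s := fun s => by
    have := le_abs_self (γ s); simp only [hγm]; linarith
  have h1 : LocallyBoundedVariationOn (fun t => ∫ s in (0:ℝ)..t, γp s) Set.univ :=
    ((hmono γp hγpnn hintp).monotoneOn _).locallyBoundedVariationOn
  have h2 : LocallyBoundedVariationOn (fun t => ∫ s in (0:ℝ)..t, γm s) Set.univ :=
    ((hmono γm hγmnn hintm).monotoneOn _).locallyBoundedVariationOn
  have : LocallyBoundedVariationOn
      (fun t => (∫ s in (0:ℝ)..t, γp s) + (-1 : ℝ) * ∫ s in (0:ℝ)..t, γm s) Set.univ :=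
    LBV.add h1 (LBV.const_mul (-1) h2)
  have heq : (fun t => ∫ s in (0:ℝ)..t, γ s)
      = fun t => (∫ s in (0:ℝ)..t, γp s) + (-1 : ℝ) * ∫ s in (0:ℝ)..t, γm s := by
    funext t; rw [hdiff t]; ring
  rw [heq]
  exact this

end Aux

/-- If `π` is a portfolio whose weight processes are continuous
semimartingales, then its trading process `T_π` satisfies
`dT_π = -(1/2) ∑ i, d⟨π_i, log μ_i⟩ + γ*_π dt` and is of locally bounded variation.
Here (pathwise) `ItoInt i` denotes the ItoInt integral `∫_0^· π_i d log μ_i`, `V i` the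
cross-variation process `⟨π_i, log μ_i⟩` (which is of locally bounded variation),
the Stratonovich structural process is
`logS t = logS 0 + ∑ i ((ItoInt i t - ItoInt i 0) + (1/2)(V i t - V i 0))`,
the relative log-return is `L t = L 0 + ∑ i (ItoInt i t - ItoInt i 0) + ∫_0^t γ*_π`,
and the trading process is `T = L - logS`. -/
theorem trading_process_locally_bounded_variation (n : ℕ)
    (π μ : Fin n → ℝ → ℝ) (hπcont : ∀ i, Continuous (π i))
    (hμpos : ∀ i t, 0 < μ i t)
    (ItoInt : Fin n → ℝ → ℝ)
    (V : Fin n → ℝ → ℝ) (hV : ∀ i, LocallyBoundedVariationOn (V i) Set.univ)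
    (γ : ℝ → ℝ) (hγint : ∀ a b : ℝ, IntervalIntegrable γ volume a b)
    (hγmeas : Measurable γ)
    (L logS T : ℝ → ℝ)
    (hL : ∀ t, L t = L 0 + (∑ i, (ItoInt i t - ItoInt i 0)) + ∫ s in (0:ℝ)..t, γ s)
    (hS : ∀ t, logS t
      = logS 0 + ∑ i, ((ItoInt i t - ItoInt i 0) + (1 / 2 : ℝ) * (V i t - V i 0)))
    (hT : ∀ t, T t = L t - logS t) :
    (∀ t, T t = T 0 - (1 / 2 : ℝ) * (∑ i, (V i t - V i 0)) + ∫ s in (0:ℝ)..t, γ s)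
      ∧ LocallyBoundedVariationOn T Set.univ := by
  have hT0 : T 0 = L 0 - logS 0 := hT 0
  have key : ∀ t, T t = T 0 - (1 / 2 : ℝ) * (∑ i, (V i t - V i 0)) + ∫ s in (0:ℝ)..t, γ s := by
    intro t
    rw [hT, hL, hS, hT0, Finset.sum_add_distrib, ← Finset.mul_sum]
    ring
  refine ⟨key, ?_⟩
  have hTeq : T = fun t =>
      (T 0 + (-(1 / 2) : ℝ) * (∑ i, (V i t + (-1 : ℝ) * V i 0)))
        + (fun u => ∫ s in (0:ℝ)..u, γ s) t := by
    funext t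
    rw [key t]
    congr 2
    · rw [neg_mul, ← neg_add_eq_sub (b := T 0), neg_add_eq_sub]
      congr 2
      apply Finset.sum_congr rfl
      intro i _
      ring
  rw [hTeq]
  apply LBV.add
  · apply LBV.add (LBV.const _ _)
    apply LBV.const_mul
    apply LBV.sum
    intro i _
    exact LBV.add (hV i) (LBV.const_mul (-1) (LBV.const (V i 0) Set.univ))
  · exact LBV.intervalIntegral hγint
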